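/- Let H be a separable real Hilbert space and ν a positive Radon measure on I = [0,T]. Let u, v : I → H be BVRC mappings with u(0) = v(0), whose differential measures have densities du/dν, dv/dν with respect to ν. Suppose there exist a nonnegative function g ∈ L¹(I, ℝ; ν) with ν({t})·g(t) = 0 for all t ∈ I, and a nonnegative function Δ ∈ L¹(I, ℝ; ν), such that for ν-almost every t ∈ I, ⟨u(t) − v(t), (du/dν)(t) − (dv/dν)(t)⟩ ≤ g(t)‖u(t) − v(t)‖² + Δ(t). Then sup_{t ∈ I} ‖u(t) − v(t)‖² ≤ ( 2∫_{]0,T]} Δ(s) dν(s) )·exp( 2∫_{]0,T]} g(s) dν(s) ). -/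

import Mathlib

open MeasureTheory Set RealInnerProductSpace
open Filter Topology

set_option linter.unusedSectionVars false
set_option maxHeartbeats 1600000


section Aux

variable {H : Type*} [NormedAddCommGroup H] [InnerProductSpace ℝ H] [CompleteSpace H]

lemma BV_split {ν : Measure ℝ} {w : ℝ → H} (hw : Integrable w ν)
    {s t : ℝ} (h0s : 0 ≤ s) (hst : s ≤ t) :
    ∫ r in Ioc 0 t, w r ∂ν = (∫ r in Ioc 0 s, w r ∂ν) + ∫ r in Ioc s t, w r ∂ν := by
  rw [← setIntegral_union (Ioc_disjoint_Ioc_of_le le_rfl) measurableSet_Ioc hw.integrableOn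
    hw.integrableOn, Ioc_union_Ioc_eq_Ioc h0s hst]

lemma BV_xdiff {ν : Measure ℝ} {w : ℝ → H} (hw : Integrable w ν)
    {s t : ℝ} (hst : s ≤ t) :
    (∫ r in Ioc 0 t, w r ∂ν) - (∫ r in Ioc 0 s, w r ∂ν)
      = ∫ r in Ioc (max s 0) t, w r ∂ν := by
  rcases le_or_gt t 0 with ht | ht
  · have e1 : Ioc (0:ℝ) t = ∅ := Ioc_eq_empty (not_lt.mpr ht)
    have e2 : Ioc (0:ℝ) s = ∅ := Ioc_eq_empty (not_lt.mpr (hst.trans ht))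
    have e3 : Ioc (max s 0) t = ∅ := Ioc_eq_empty (not_lt.mpr (ht.trans (le_max_right s 0)))
    simp [e1, e2, e3]
  · have h1 : (0:ℝ) ≤ max s 0 := le_max_right _ _
    have h2 : max s 0 ≤ t := max_le hst ht.le
    have h3 : Ioc (0:ℝ) (max s 0) = Ioc 0 s := by
      rcases le_total s 0 with h | h
      · rw [max_eq_right h, Ioc_self, Ioc_eq_empty (by simpa using h)]
      · rw [max_eq_left h]
    rw [BV_split hw h1 h2, h3]
    abel

lemma BV_norm_le {ν : Measure ℝ} {w : ℝ → H} (hw : Integrable w ν) (s₀ : Set ℝ) :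
    ‖∫ r in s₀, w r ∂ν‖ ≤ ∫ r, ‖w r‖ ∂ν := by
  refine (norm_integral_le_integral_norm _).trans ?_
  exact setIntegral_le_integral hw.norm (Eventually.of_forall fun r => norm_nonneg _)

end Aux

section Aux2
variable {H : Type*} [NormedAddCommGroup H] [InnerProductSpace ℝ H] [CompleteSpace H]
  [TopologicalSpace.SeparableSpace H]

lemma BV_tendsto_small {ν : Measure ℝ} [IsFiniteMeasure ν] {w : ℝ → H} (hw : Integrable w ν)
    (m : ℝ) :
    Tendsto (fun n : ℕ => ∫ r in Ioc m (m + ((2:ℝ)^n)⁻¹), ‖w r‖ ∂ν) atTop (𝓝 0) := by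
  have h0 : Tendsto (fun n : ℕ => ∫ r,
      (Ioc m (m + ((2:ℝ)^n)⁻¹)).indicator (fun r => ‖w r‖) r ∂ν) atTop (𝓝 (∫ _ : ℝ, (0:ℝ) ∂ν)) := by
    apply tendsto_integral_of_dominated_convergence (fun r => ‖w r‖)
    · intro n; exact hw.norm.aestronglyMeasurable.indicator measurableSet_Ioc
    · exact hw.norm
    · intro n
      refine Eventually.of_forall fun r => ?_
      refine (norm_indicator_le_norm_self _ _).trans ?_
      simp [Real.norm_eq_abs]
    · refine Eventually.of_forall fun r => ?_
      rcases le_or_gt r m with hr | hr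
      · have : ∀ n : ℕ, (Ioc m (m + ((2:ℝ)^n)⁻¹)).indicator (fun r => ‖w r‖) r = 0 := by
          intro n
          exact indicator_of_notMem (fun hmem => absurd hmem.1 (not_lt.mpr hr)) _
        simpa [this] using tendsto_const_nhds
      · have hev : ∀ᶠ n : ℕ in atTop,
            (Ioc m (m + ((2:ℝ)^n)⁻¹)).indicator (fun r => ‖w r‖) r = 0 := by
          have htd : Tendsto (fun n : ℕ => ((2:ℝ)^n)⁻¹) atTop (𝓝 0) := by
            simpa [inv_pow] using
              tendsto_pow_atTop_nhds_zero_of_lt_one (by norm_num : (0:ℝ) ≤ 2⁻¹)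
                (by norm_num : (2:ℝ)⁻¹ < 1)
          filter_upwards [htd.eventually_lt_const (sub_pos.mpr hr)] with n hn
          exact indicator_of_notMem
            (fun hmem => absurd hmem.2 (not_le.mpr (by linarith))) _
        exact Tendsto.congr' (by filter_upwards [hev] with n hn; exact hn.symm) tendsto_const_nhds
  simpa [integral_indicator measurableSet_Ioc] using h0

lemma BV_meas {ν : Measure ℝ} [IsFiniteMeasure ν] {w : ℝ → H} (hw : Integrable w ν) :
    StronglyMeasurable (fun s => ∫ r in Ioc 0 s, w r ∂ν) := by
  haveI : SecondCountableTopology H := UniformSpace.secondCountable_of_separable H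
  borelize H
  set x : ℝ → H := fun s => ∫ r in Ioc 0 s, w r ∂ν with hxdef
  have happrox : ∀ n : ℕ, StronglyMeasurable (fun s : ℝ => x ((⌈s * 2^n⌉ : ℤ) / 2^n)) := by
    intro n
    have h1 : Measurable fun s : ℝ => (⌈s * 2^n⌉ : ℤ) :=
      Int.measurable_ceil.comp (measurable_id.mul_const _)
    have h2 : Measurable fun k : ℤ => x ((k:ℝ) / 2^n) := measurable_from_top
    exact h2.stronglyMeasurable.comp_measurable h1
  refine stronglyMeasurable_of_tendsto atTop happrox ?_
  rw [tendsto_pi_nhds]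
  intro s
  rw [← tendsto_sub_nhds_zero_iff]
  refine squeeze_zero_norm
    (a := fun n : ℕ => ∫ r in Ioc (max s 0) (max s 0 + ((2:ℝ)^n)⁻¹), ‖w r‖ ∂ν)
    ?_ (BV_tendsto_small hw (max s 0))
  · intro n
    have hle : s ≤ ((⌈s * 2^n⌉ : ℤ):ℝ) / 2^n := by
      rw [le_div_iff₀ (by positivity)]
      exact Int.le_ceil _
    rw [hxdef]
    rw [BV_xdiff hw hle]
    refine (norm_integral_le_integral_norm _).trans ?_
    refine setIntegral_mono_set hw.norm.integrableOn
      (Eventually.of_forall fun r => norm_nonneg _) (HasSubset.Subset.eventuallyLE ?_)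
    apply Ioc_subset_Ioc_right
    have h2n : (0:ℝ) < 2^n := by positivity
    have : ((⌈s * 2^n⌉ : ℤ):ℝ) / 2^n ≤ s + ((2:ℝ)^n)⁻¹ := by
      rw [div_le_iff₀ h2n]
      have h1 := (Int.ceil_lt_add_one (s * 2^n)).le
      have h2 : (s + ((2:ℝ)^n)⁻¹) * 2^n = s * 2^n + 1 := by field_simp
      linarith
    refine this.trans (by gcongr; exact le_max_left _ _)
end Aux2

section Aux3
variable {H : Type*} [NormedAddCommGroup H] [InnerProductSpace ℝ H] [CompleteSpace H]
  [TopologicalSpace.SeparableSpace H]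

lemma BV_energy {ν : Measure ℝ} [IsFiniteMeasure ν] {w : ℝ → H} (hw : Integrable w ν)
    (t : ℝ) :
    ‖∫ r in Ioc 0 t, w r ∂ν‖ ^ 2
      ≤ 2 * ∫ s in Ioc 0 t, ⟪∫ r in Ioc 0 s, w r ∂ν, w s⟫ ∂ν := by
  set x : ℝ → H := fun s => ∫ r in Ioc 0 s, w r ∂ν with hxdef
  set μ : Measure ℝ := ν.restrict (Ioc 0 t) with hμdef
  set M : ℝ := ∫ r, ‖w r‖ ∂ν with hMdef
  have hxb : ∀ s, ‖x s‖ ≤ M := fun s => BV_norm_le hw _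
  have hwμ : Integrable w μ := hw.restrict
  have hxm : AEStronglyMeasurable x μ := (BV_meas hw).aestronglyMeasurable
  -- integrability of the diagonal-ish inner products
  have hA : Integrable (fun s => ⟪x s, w s⟫) μ := by
    refine Integrable.mono' (hwμ.norm.const_mul M)
      (hxm.inner hwμ.aestronglyMeasurable) (Eventually.of_forall fun s => ?_)
    refine (norm_inner_le_norm _ _).trans ?_
    exact mul_le_mul_of_nonneg_right (hxb s) (norm_nonneg _)
  have hB : Integrable (fun r => ⟪w r, x t - x r⟫) μ := by
    refine Integrable.mono' (hwμ.norm.const_mul (2 * M))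
      (hwμ.aestronglyMeasurable.inner (aestronglyMeasurable_const.sub hxm))
      (Eventually.of_forall fun r => ?_)
    refine (norm_inner_le_norm _ _).trans ?_
    have h1 : ‖x t - x r‖ ≤ 2 * M := by
      refine (norm_sub_le _ _).trans ?_
      have := hxb t; have := hxb r; linarith
    calc ‖w r‖ * ‖x t - x r‖ ≤ ‖w r‖ * (2 * M) :=
          mul_le_mul_of_nonneg_left h1 (norm_nonneg _)
      _ = 2 * M * ‖w r‖ := by ring
  -- Step 1
  have step1 : ‖x t‖ ^ 2 = ∫ r, ⟪x t, w r⟫ ∂μ := by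
    rw [integral_inner hwμ]
    exact (real_inner_self_eq_norm_sq _).symm
  -- pointwise splitting
  have hsplit : ∀ᵐ r ∂μ, ⟪x t, w r⟫ = ⟪x r, w r⟫ + ⟪w r, x t - x r⟫ := by
    refine Eventually.of_forall fun r => ?_
    have h := inner_add_left (𝕜 := ℝ) (x r) (x t - x r) (w r)
    rw [add_sub_cancel] at h
    have h2 := real_inner_comm (x t - x r) (w r)
    linarith
  have step2 : ‖x t‖ ^ 2 = (∫ r, ⟪x r, w r⟫ ∂μ) + ∫ r, ⟪w r, x t - x r⟫ ∂μ := by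
    rw [step1, integral_congr_ae hsplit, integral_add hA hB]
  -- the two-variable kernel
  set Φ : ℝ → ℝ → ℝ := fun r s => (Ioi r).indicator (fun s' => ⟪w r, w s'⟫) s with hΦdef
  have hcurry : ∀ r s, Φ r s = if r < s then ⟪w r, w s⟫ else 0 := by
    intro r s
    rw [hΦdef]
    simp [Set.indicator_apply]
  have hΦuncurry : (fun p : ℝ × ℝ => Φ p.1 p.2)
      = {p : ℝ × ℝ | p.1 < p.2}.indicator (fun p => ⟪w p.1, w p.2⟫) := by
    ext p
    rw [hcurry]
    simp [Set.indicator_apply, Set.mem_setOf_eq]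
  have hΦint : Integrable (fun p : ℝ × ℝ => Φ p.1 p.2) (μ.prod μ) := by
    have hwm1 : AEStronglyMeasurable (fun p : ℝ × ℝ => w p.1) (μ.prod μ) :=
      hwμ.aestronglyMeasurable.comp_fst
    have hwm2 : AEStronglyMeasurable (fun p : ℝ × ℝ => w p.2) (μ.prod μ) :=
      hwμ.aestronglyMeasurable.comp_snd
    have hmeas : AEStronglyMeasurable (fun p : ℝ × ℝ => Φ p.1 p.2) (μ.prod μ) := by
      rw [hΦuncurry]
      exact (hwm1.inner hwm2).indicator (measurableSet_lt measurable_fst measurable_snd)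
    refine Integrable.mono' (hwμ.norm.mul_prod hwμ.norm) hmeas
      (Eventually.of_forall fun p => ?_)
    rw [hcurry]
    split_ifs with h
    · exact norm_inner_le_norm _ _
    · simp only [norm_zero]
      positivity
  -- identify the B-term with an iterated integral of Φ
  have hBeq : ∀ᵐ r ∂μ, ⟪w r, x t - x r⟫ = ∫ s, Φ r s ∂μ := by
    filter_upwards [ae_restrict_mem measurableSet_Ioc] with r hr
    have h1 : x t - x r = ∫ s in Ioc r t, w s ∂ν := by
      show (∫ r' in Ioc 0 t, w r' ∂ν) - (∫ r' in Ioc 0 r, w r' ∂ν) = _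
      rw [BV_xdiff hw hr.2, max_eq_left hr.1.le]
    have h2 : ∫ s, Φ r s ∂μ = ∫ s in Ioi r, ⟪w r, w s⟫ ∂μ := by
      have he : (fun s => Φ r s) = (Ioi r).indicator (fun s' => ⟪w r, w s'⟫) := by
        ext s
        rw [hcurry]
        simp [Set.indicator_apply]
      rw [he]
      exact integral_indicator measurableSet_Ioi
    have h3 : μ.restrict (Ioi r) = ν.restrict (Ioc r t) := by
      rw [hμdef, Measure.restrict_restrict measurableSet_Ioi]
      congr 1
      ext s'
      simp only [mem_inter_iff, mem_Ioi, mem_Ioc]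
      constructor
      · rintro ⟨h1', h2', h3'⟩; exact ⟨h1', h3'⟩
      · rintro ⟨h1', h2'⟩; exact ⟨h1', hr.1.trans h1', h2'⟩
    rw [h2, h3, h1, ← integral_inner hw.integrableOn]
  have hswap : ∫ r, (∫ s, Φ r s ∂μ) ∂μ = ∫ s, (∫ r, Φ r s ∂μ) ∂μ :=
    integral_integral_swap hΦint
  -- evaluate the swapped inner integral
  have hinner : ∀ᵐ s ∂μ, (∫ r, Φ r s ∂μ)
      = ⟪x s, w s⟫ - (ν {s}).toReal * ‖w s‖ ^ 2 := by
    filter_upwards [ae_restrict_mem measurableSet_Ioc] with s hs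
    have h1 : (fun r => Φ r s) = (Iio s).indicator (fun r => ⟪w r, w s⟫) := by
      ext r
      rw [hcurry]
      simp [Set.indicator_apply]
    have h2 : μ.restrict (Iio s) = ν.restrict (Ioo 0 s) := by
      rw [hμdef, Measure.restrict_restrict measurableSet_Iio]
      congr 1
      ext r
      simp only [mem_inter_iff, mem_Iio, mem_Ioo, mem_Ioc]
      constructor
      · rintro ⟨h1', h2', h3'⟩; exact ⟨h2', h1'⟩
      · rintro ⟨h1', h2'⟩; exact ⟨h2', h1', (h2'.le.trans hs.2)⟩
    have h3 : ∫ r in Ioo 0 s, ⟪w r, w s⟫ ∂ν = ⟪w s, ∫ r in Ioo 0 s, w r ∂ν⟫ := by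
      rw [← integral_inner hw.integrableOn]
      exact integral_congr_ae (Eventually.of_forall fun r => real_inner_comm _ _)
    have hxs : ∫ r in Ioo 0 s, w r ∂ν = x s - (ν {s}).toReal • w s := by
      have hdisj : Disjoint (Ioo (0:ℝ) s) {s} :=
        disjoint_singleton_right.mpr (fun h => absurd h.2 (lt_irrefl s))
      have hu : Ioo (0:ℝ) s ∪ {s} = Ioc 0 s := Ioo_union_right hs.1
      have hxsplit : x s = (∫ r in Ioo 0 s, w r ∂ν) + ∫ r in ({s} : Set ℝ), w r ∂ν := by
        show (∫ r in Ioc 0 s, w r ∂ν) = _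
        rw [← setIntegral_union hdisj (measurableSet_singleton s) hw.integrableOn
          hw.integrableOn, hu]
      have hsing : ∫ r in ({s} : Set ℝ), w r ∂ν = (ν {s}).toReal • w s := by
        rw [Measure.restrict_singleton, integral_smul_measure, integral_dirac]
      rw [hxsplit, hsing]
      abel
    rw [h1, integral_indicator measurableSet_Iio, h2, h3, hxs, inner_sub_right,
      inner_smul_right, real_inner_comm (w s) (x s), real_inner_self_eq_norm_sq]
  -- integrability of the swapped inner integral and the atomic correction
  have hC : Integrable (fun s => ∫ r, Φ r s ∂μ) μ := by
    have := (hΦint.swap).integral_prod_left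
    exact this
  have hD : Integrable (fun s => (ν {s}).toReal * ‖w s‖ ^ 2) μ := by
    refine (hA.sub hC).congr ?_
    filter_upwards [hinner] with s hs
    simp only [Pi.sub_apply]
    rw [hs]
    ring
  have hDnn : 0 ≤ ∫ s, (ν {s}).toReal * ‖w s‖ ^ 2 ∂μ :=
    integral_nonneg fun s => mul_nonneg ENNReal.toReal_nonneg (sq_nonneg _)
  -- final assembly
  have final : (∫ r, ⟪w r, x t - x r⟫ ∂μ) ≤ ∫ r, ⟪x r, w r⟫ ∂μ := by
    rw [integral_congr_ae hBeq, hswap, integral_congr_ae hinner,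
      integral_sub hA hD]
    linarith
  have := step2
  rw [hμdef] at this final
  rw [this]
  have h2A : (∫ s in Ioc 0 t, ⟪x s, w s⟫ ∂ν) + (∫ r in Ioc 0 t, ⟪w r, x t - x r⟫ ∂ν)
      ≤ 2 * ∫ s in Ioc 0 t, ⟪x s, w s⟫ ∂ν := by linarith
  exact h2A


end Aux3

lemma BV_contF {ν : Measure ℝ} [IsFiniteMeasure ν] {h : ℝ → ℝ} (hh : Integrable h ν)
    (hh0 : ∀ r, 0 ≤ h r) {T : ℝ}
    (hatom : ∀ t₀ ∈ Icc 0 T, (ν {t₀}).toReal * h t₀ = 0) :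
    ContinuousOn (fun t => ∫ r in Ioc 0 t, h r ∂ν) (Icc 0 T) := by
  rw [Metric.continuousOn_iff]
  intro t₀ ht₀ ε hε
  have hδ : ∃ δ > (0:ℝ), ∫ r in Ioc (t₀ - δ) (t₀ + δ), h r ∂ν < ε := by
    by_contra hcon
    push_neg at hcon
    have hge : ∀ n : ℕ, ε ≤ ∫ r in Ioc (t₀ - ((n:ℝ)+1)⁻¹) (t₀ + ((n:ℝ)+1)⁻¹), h r ∂ν :=
      fun n => hcon _ (by positivity)
    have hlim0 : Tendsto
        (fun n : ℕ => ∫ r, (Ioc (t₀ - ((n:ℝ)+1)⁻¹) (t₀ + ((n:ℝ)+1)⁻¹)).indicator h r ∂ν)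
        atTop (𝓝 (∫ r, ({t₀} : Set ℝ).indicator h r ∂ν)) := by
      apply tendsto_integral_of_dominated_convergence (fun r => ‖h r‖)
      · intro n; exact hh.aestronglyMeasurable.indicator measurableSet_Ioc
      · exact hh.norm
      · intro n
        refine Eventually.of_forall fun r => ?_
        exact norm_indicator_le_norm_self _ _
      · refine Eventually.of_forall fun r => ?_
        rcases eq_or_ne r t₀ with rfl | hne
        · have hmem : ∀ n : ℕ,
              (Ioc (r - ((n:ℝ)+1)⁻¹) (r + ((n:ℝ)+1)⁻¹)).indicator h r = h r := by
            intro n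
            have hp : (0:ℝ) < ((n:ℝ)+1)⁻¹ := by positivity
            exact indicator_of_mem (mem_Ioc.mpr ⟨by linarith, by linarith⟩) _
          rw [indicator_of_mem (mem_singleton _)]
          exact Tendsto.congr (fun n => (hmem n).symm) tendsto_const_nhds
        · have hz : ({t₀} : Set ℝ).indicator h r = 0 :=
            indicator_of_notMem (by simpa using hne) _
          rw [hz]
          have htd : Tendsto (fun n : ℕ => ((n:ℝ)+1)⁻¹) atTop (𝓝 0) := by
            simpa [one_div] using tendsto_one_div_add_atTop_nhds_zero_nat (𝕜 := ℝ)
          have hev : ∀ᶠ n : ℕ in atTop,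
              (Ioc (t₀ - ((n:ℝ)+1)⁻¹) (t₀ + ((n:ℝ)+1)⁻¹)).indicator h r = 0 := by
            filter_upwards [htd.eventually_lt_const (abs_pos.mpr (sub_ne_zero.mpr hne))]
              with n hn
            refine indicator_of_notMem (fun hmem => ?_) _
            rcases abs_cases (r - t₀) with ⟨he, _⟩ | ⟨he, _⟩ <;>
              [skip; skip] <;>
              (rw [he] at hn; rcases mem_Ioc.mp hmem with ⟨h1, h2⟩; linarith)
          exact Tendsto.congr' (by filter_upwards [hev] with n hn; exact hn.symm)
            tendsto_const_nhds
    rw [integral_indicator (measurableSet_singleton _)] at hlim0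
    have hlim : Tendsto
        (fun n : ℕ => ∫ r in Ioc (t₀ - ((n:ℝ)+1)⁻¹) (t₀ + ((n:ℝ)+1)⁻¹), h r ∂ν)
        atTop (𝓝 (∫ r in ({t₀} : Set ℝ), h r ∂ν)) := by
      refine hlim0.congr fun n => ?_
      rw [integral_indicator measurableSet_Ioc]
    have hsing : ∫ r in ({t₀} : Set ℝ), h r ∂ν = 0 := by
      rw [Measure.restrict_singleton, integral_smul_measure, integral_dirac, smul_eq_mul]
      exact hatom t₀ ht₀
    rw [hsing] at hlim
    have : ε ≤ 0 := ge_of_tendsto hlim (Eventually.of_forall hge)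
    linarith
  obtain ⟨δ, hδ0, hδε⟩ := hδ
  refine ⟨δ, hδ0, fun t ht hdist => ?_⟩
  rw [Real.dist_eq] at hdist ⊢
  rcases abs_lt.mp hdist with ⟨hd1, hd2⟩
  have hmono : ∀ a b : ℝ, t₀ - δ ≤ a → a ≤ b → b ≤ t₀ + δ →
      ∫ r in Ioc a b, h r ∂ν < ε := by
    intro a b ha hab hb
    refine lt_of_le_of_lt ?_ hδε
    refine setIntegral_mono_set hh.integrableOn (Eventually.of_forall fun r => hh0 r)
      (HasSubset.Subset.eventuallyLE (Ioc_subset_Ioc ha hb))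
  rcases le_total t₀ t with hle | hle
  · have he : (∫ r in Ioc 0 t, h r ∂ν) - ∫ r in Ioc 0 t₀, h r ∂ν
        = ∫ r in Ioc t₀ t, h r ∂ν := by
      rw [BV_split hh ht₀.1 hle]; ring
    rw [he, abs_of_nonneg (setIntegral_nonneg measurableSet_Ioc fun r _ => hh0 r)]
    exact hmono t₀ t (by linarith) hle (by linarith)
  · have he : (∫ r in Ioc 0 t₀, h r ∂ν) - ∫ r in Ioc 0 t, h r ∂ν
        = ∫ r in Ioc t t₀, h r ∂ν := by
      rw [BV_split hh ht.1 hle]; ring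
    rw [abs_sub_comm, he,
      abs_of_nonneg (setIntegral_nonneg measurableSet_Ioc fun r _ => hh0 r)]
    exact hmono t t₀ (by linarith) hle (by linarith)


/-- Let `ν` be a positive Radon measure on `I = [0,T]` and `u, v`
BVRC mappings into a separable real Hilbert space with `u(0) = v(0)` and densities
`du/dν = wu`, `dv/dν = wv`. If there are nonnegative `g, Δ ∈ L¹(I,ℝ;ν)` with
`ν({t}) g(t) = 0` on `I` and `⟪u(t) - v(t), wu(t) - wv(t)⟫ ≤ g(t)‖u(t) - v(t)‖² + Δ(t)`
ν-a.e. on `I`, then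
`sup_{t ∈ I} ‖u(t) - v(t)‖² ≤ (2 ∫_{]0,T]} Δ dν) exp(2 ∫_{]0,T]} g dν)`. -/
theorem bvrc_gronwall_combined_estimate
    {H : Type*} [NormedAddCommGroup H] [InnerProductSpace ℝ H]
    [CompleteSpace H] [TopologicalSpace.SeparableSpace H]
    (T : ℝ) (hT : 0 < T) (ν : Measure ℝ) [IsFiniteMeasure ν]
    (u v : ℝ → H) (wu wv : ℝ → H)
    (hu_bv : BoundedVariationOn u (Icc 0 T))
    (hu_rc : ∀ t ∈ Ico 0 T, ContinuousWithinAt u (Ici t) t)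
    (hv_bv : BoundedVariationOn v (Icc 0 T))
    (hv_rc : ∀ t ∈ Ico 0 T, ContinuousWithinAt v (Ici t) t)
    (hwu_int : IntegrableOn wu (Icc 0 T) ν)
    (hwv_int : IntegrableOn wv (Icc 0 T) ν)
    (hu_dens : ∀ t ∈ Icc 0 T, u t = u 0 + ∫ s in Ioc 0 t, wu s ∂ν)
    (hv_dens : ∀ t ∈ Icc 0 T, v t = v 0 + ∫ s in Ioc 0 t, wv s ∂ν)
    (h0 : u 0 = v 0)
    (g Δ : ℝ → ℝ)
    (hg0 : ∀ t ∈ Icc 0 T, 0 ≤ g t)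
    (hg_int : IntegrableOn g (Icc 0 T) ν)
    (hg_atom : ∀ t ∈ Icc 0 T, (ν {t}).toReal * g t = 0)
    (hΔ0 : ∀ t ∈ Icc 0 T, 0 ≤ Δ t)
    (hΔ_int : IntegrableOn Δ (Icc 0 T) ν)
    (hae : ∀ᵐ t ∂ν.restrict (Icc 0 T),
      ⟪u t - v t, wu t - wv t⟫ ≤ g t * ‖u t - v t‖ ^ 2 + Δ t) :
    ∀ t ∈ Icc 0 T, ‖u t - v t‖ ^ 2 ≤
      (2 * ∫ s in Ioc 0 T, Δ s ∂ν) * Real.exp (2 * ∫ s in Ioc 0 T, g s ∂ν) := by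
  -- the difference field and its primitive
  set w : ℝ → H := (Ioc 0 T).indicator (fun s => wu s - wv s) with hwdef
  have hw_int : Integrable w ν := by
    rw [hwdef, integrable_indicator_iff measurableSet_Ioc]
    exact (hwu_int.mono_set Ioc_subset_Icc_self).sub (hwv_int.mono_set Ioc_subset_Icc_self)
  set x : ℝ → H := fun s => ∫ r in Ioc 0 s, w r ∂ν with hxdef
  have hx_eq : ∀ s ∈ Icc 0 T, x s = u s - v s := by
    intro s hs
    have hsub : Ioc 0 s ⊆ Icc 0 T := fun r hr => ⟨hr.1.le, hr.2.trans hs.2⟩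
    have h1 : u s - v s = ∫ r in Ioc 0 s, (wu r - wv r) ∂ν := by
      rw [hu_dens s hs, hv_dens s hs, h0,
        integral_sub (hwu_int.mono_set hsub) (hwv_int.mono_set hsub)]
      abel
    have h2 : (∫ r in Ioc 0 s, w r ∂ν) = ∫ r in Ioc 0 s, (wu r - wv r) ∂ν := by
      refine setIntegral_congr_fun measurableSet_Ioc fun r hr => ?_
      rw [hwdef]
      exact indicator_of_mem (show r ∈ Ioc 0 T from ⟨hr.1, hr.2.trans hs.2⟩)
        (fun s => wu s - wv s)
    rw [hxdef]
    show (∫ r in Ioc 0 s, w r ∂ν) = u s - v s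
    rw [h2, ← h1]
  set M : ℝ := ∫ r, ‖w r‖ ∂ν with hMdef
  have hxb : ∀ s, ‖x s‖ ≤ M := fun s => BV_norm_le hw_int _
  set φ : ℝ → ℝ := fun s => ‖x s‖ ^ 2 with hφdef
  have hφ0 : ∀ s, 0 ≤ φ s := fun s => sq_nonneg _
  have hφM : ∀ s, φ s ≤ M ^ 2 := fun s =>
    pow_le_pow_left₀ (norm_nonneg _) (hxb s) 2
  have hxm : StronglyMeasurable x := BV_meas hw_int
  have hφsm : StronglyMeasurable φ :=
    ((continuous_pow 2).comp continuous_norm).comp_stronglyMeasurable hxm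
  -- the constants a, B and auxiliary integrands
  set a : ℝ := 2 * ∫ s in Ioc 0 T, Δ s ∂ν with hadef
  have hΔ_Ioc : IntegrableOn Δ (Ioc 0 T) ν := hΔ_int.mono_set Ioc_subset_Icc_self
  have hΔ0' : ∀ s ∈ Ioc 0 T, 0 ≤ Δ s := fun s hs => hΔ0 s ⟨hs.1.le, hs.2⟩
  have ha0 : 0 ≤ a := by
    have h' : 0 ≤ ∫ s in Ioc 0 T, Δ s ∂ν := setIntegral_nonneg measurableSet_Ioc hΔ0'
    rw [hadef]; linarith
  set gind : ℝ → ℝ := (Ioc 0 T).indicator (fun s => 2 * g s) with hgind_def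
  have hgind_nonneg : ∀ r, 0 ≤ gind r := by
    intro r
    rw [hgind_def]
    by_cases h : r ∈ Ioc 0 T
    · rw [indicator_of_mem h]
      have := hg0 r ⟨h.1.le, h.2⟩; linarith
    · rw [indicator_of_notMem h]
  have hgind_int : Integrable gind ν := by
    rw [hgind_def, integrable_indicator_iff measurableSet_Ioc]
    exact (hg_int.mono_set Ioc_subset_Icc_self).const_mul 2
  have hgind_eq : ∀ r ∈ Ioc 0 T, gind r = 2 * g r := fun r hr => by
    rw [hgind_def]; exact indicator_of_mem hr _
  set F : ℝ → ℝ := fun τ => ∫ r in Ioc 0 τ, gind r ∂ν with hFdef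
  have hFcont : ContinuousOn F (Icc 0 T) := by
    refine BV_contF hgind_int hgind_nonneg (fun t₀ ht₀ => ?_)
    by_cases h : t₀ ∈ Ioc 0 T
    · rw [hgind_eq t₀ h]
      have := hg_atom t₀ ht₀
      ring_nf
      ring_nf at this
      nlinarith [this]
    · rw [hgind_def, indicator_of_notMem h]
      ring
  set B : ℝ := F T with hBdef
  have hB0 : 0 ≤ B := setIntegral_nonneg measurableSet_Ioc fun r _ => hgind_nonneg r
  have hF0 : F 0 = 0 := by rw [hFdef]; simp
  have hFdiff : ∀ p q : ℝ, 0 ≤ p → p ≤ q → F q - F p = ∫ r in Ioc p q, gind r ∂ν := by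
    intro p q h1 h2
    rw [hFdef]
    show (∫ r in Ioc 0 q, gind r ∂ν) - (∫ r in Ioc 0 p, gind r ∂ν) = _
    rw [BV_split (H := ℝ) hgind_int h1 h2]
    ring
  have hFmono : ∀ p q : ℝ, 0 ≤ p → p ≤ q → F p ≤ F q := by
    intro p q h1 h2
    have := hFdiff p q h1 h2
    have h3 : 0 ≤ ∫ r in Ioc p q, gind r ∂ν :=
      setIntegral_nonneg measurableSet_Ioc fun r _ => hgind_nonneg r
    linarith
  -- ψ and G
  set ψ : ℝ → ℝ := (Ioc 0 T).indicator (fun s => φ s * (2 * g s)) with hψdef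
  have hψ_eq : ∀ r ∈ Ioc 0 T, ψ r = φ r * (2 * g r) := fun r hr => by
    rw [hψdef]; exact indicator_of_mem hr _
  have hψ_nonneg : ∀ r, 0 ≤ ψ r := by
    intro r
    rw [hψdef]
    by_cases h : r ∈ Ioc 0 T
    · rw [indicator_of_mem h]
      have := hg0 r ⟨h.1.le, h.2⟩
      have := hφ0 r
      positivity
    · rw [indicator_of_notMem h]
  have hψ_le : ∀ r, ψ r ≤ M ^ 2 * gind r := by
    intro r
    by_cases h : r ∈ Ioc 0 T
    · rw [hψ_eq r h, hgind_eq r h]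
      have h1 := hg0 r ⟨h.1.le, h.2⟩
      have h2 := hφM r
      nlinarith
    · rw [hψdef, hgind_def, indicator_of_notMem h, indicator_of_notMem h]
      simp
  have hφ_bdd : ∃ C, ∀ s, ‖φ s‖ ≤ C := by
    refine ⟨M ^ 2, fun s => ?_⟩
    rw [Real.norm_eq_abs, abs_of_nonneg (hφ0 s)]
    exact hφM s
  have hψ_int : Integrable ψ ν := by
    rw [hψdef, integrable_indicator_iff measurableSet_Ioc]
    exact Integrable.bdd_mul ((hg_int.mono_set Ioc_subset_Icc_self).const_mul 2)
      hφsm.aestronglyMeasurable.restrict (Eventually.of_forall hφ_bdd.choose_spec)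
  set G : ℝ → ℝ := fun τ => a + ∫ r in Ioc 0 τ, ψ r ∂ν with hGdef
  have hGa : ∀ τ, a ≤ G τ := by
    intro τ
    have : 0 ≤ ∫ r in Ioc 0 τ, ψ r ∂ν :=
      setIntegral_nonneg measurableSet_Ioc fun r _ => hψ_nonneg r
    rw [hGdef]
    show a ≤ a + ∫ r in Ioc 0 τ, ψ r ∂ν
    linarith
  have hGdiff : ∀ p q : ℝ, 0 ≤ p → p ≤ q → G q - G p = ∫ r in Ioc p q, ψ r ∂ν := by
    intro p q h1 h2
    rw [hGdef]
    show (a + ∫ r in Ioc 0 q, ψ r ∂ν) - (a + ∫ r in Ioc 0 p, ψ r ∂ν) = _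
    rw [BV_split (H := ℝ) hψ_int h1 h2]
    ring
  have hGmono : ∀ p q : ℝ, 0 ≤ p → p ≤ q → G p ≤ G q := by
    intro p q h1 h2
    have := hGdiff p q h1 h2
    have h3 : 0 ≤ ∫ r in Ioc p q, ψ r ∂ν :=
      setIntegral_nonneg measurableSet_Ioc fun r _ => hψ_nonneg r
    linarith
  have hG0 : G 0 = a := by
    rw [hGdef]
    show a + ∫ r in Ioc 0 0, ψ r ∂ν = a
    simp
  -- the fundamental pointwise estimate  φ ≤ G  on [0, T]
  have hkey : ∀ τ ∈ Icc 0 T, φ τ ≤ G τ := by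
    intro τ hτ
    have h1 : φ τ ≤ 2 * ∫ s in Ioc 0 τ, ⟪x s, w s⟫ ∂ν := BV_energy hw_int τ
    have hsub : Ioc 0 τ ⊆ Icc 0 T := fun r hr => ⟨hr.1.le, hr.2.trans hτ.2⟩
    have hIsub : Ioc 0 τ ⊆ Ioc 0 T := fun r hr => ⟨hr.1, hr.2.trans hτ.2⟩
    have hInt1 : Integrable (fun s => ⟪x s, w s⟫) (ν.restrict (Ioc 0 τ)) := by
      refine Integrable.mono' ((hw_int.restrict (s := Ioc 0 τ)).norm.const_mul M)
        (hxm.aestronglyMeasurable.restrict.inner hw_int.aestronglyMeasurable.restrict)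
        (Eventually.of_forall fun s => ?_)
      refine (norm_inner_le_norm _ _).trans ?_
      exact mul_le_mul_of_nonneg_right (hxb s) (norm_nonneg _)
    have hInt_gφ : Integrable (fun s => g s * φ s) (ν.restrict (Ioc 0 τ)) := by
      have := Integrable.bdd_mul (hg_int.mono_set hsub)
        hφsm.aestronglyMeasurable.restrict (Eventually.of_forall hφ_bdd.choose_spec)
      refine this.congr (Eventually.of_forall fun s => ?_)
      ring
    have hInt2 : Integrable (fun s => g s * φ s + Δ s) (ν.restrict (Ioc 0 τ)) :=
      hInt_gφ.add (hΔ_int.mono_set hsub)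
    have hae' : ∀ᵐ s ∂ν.restrict (Ioc 0 τ), ⟪x s, w s⟫ ≤ g s * φ s + Δ s := by
      filter_upwards [ae_restrict_of_ae_restrict_of_subset hsub hae,
        ae_restrict_mem measurableSet_Ioc] with s hs hmem
      have hsIcc : s ∈ Icc 0 T := hsub hmem
      have hxs : x s = u s - v s := hx_eq s hsIcc
      have hws : w s = wu s - wv s := by
        rw [hwdef]; exact indicator_of_mem (hIsub hmem) _
      have hφs : φ s = ‖u s - v s‖ ^ 2 := by
        rw [hφdef]
        show ‖x s‖ ^ 2 = _
        rw [hxs]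
      rw [hxs, hws, hφs]
      exact hs
    have h2 : ∫ s in Ioc 0 τ, ⟪x s, w s⟫ ∂ν ≤ ∫ s in Ioc 0 τ, (g s * φ s + Δ s) ∂ν :=
      integral_mono_ae hInt1 hInt2 hae'
    have h3 : ∫ s in Ioc 0 τ, (g s * φ s + Δ s) ∂ν
        = (∫ s in Ioc 0 τ, g s * φ s ∂ν) + ∫ s in Ioc 0 τ, Δ s ∂ν :=
      integral_add hInt_gφ (hΔ_int.mono_set hsub)
    have h4 : ∫ s in Ioc 0 τ, ψ s ∂ν = 2 * ∫ s in Ioc 0 τ, g s * φ s ∂ν := by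
      have he : ∫ s in Ioc 0 τ, ψ s ∂ν = ∫ s in Ioc 0 τ, 2 * (g s * φ s) ∂ν := by
        refine setIntegral_congr_fun measurableSet_Ioc fun s hs => ?_
        rw [hψ_eq s (hIsub hs)]
        ring
      rw [he, integral_const_mul]
    have h5 : ∫ s in Ioc 0 τ, Δ s ∂ν ≤ ∫ s in Ioc 0 T, Δ s ∂ν := by
      refine setIntegral_mono_set hΔ_Ioc ?_ (HasSubset.Subset.eventuallyLE hIsub)
      filter_upwards [ae_restrict_mem measurableSet_Ioc] with s hs
      exact hΔ0' s hs
    have h6 : G τ = a + ∫ s in Ioc 0 τ, ψ s ∂ν := by rw [hGdef]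
    rw [hadef] at h6
    linarith
  clear_value w x M φ a gind F B ψ G
  -- Gronwall iteration along a partition with equal F-increments
  have hGbound : ∀ n : ℕ, B < n → ∀ τ ∈ Icc 0 T, G τ ≤ a / (1 - B / n) ^ n := by
    intro n hn
    have hn0 : 0 < (n : ℝ) := lt_of_le_of_lt hB0 hn
    have hε0 : 0 ≤ B / n := div_nonneg hB0 hn0.le
    have hε1 : B / n < 1 := (div_lt_one hn0).mpr hn
    have h1ε : 0 < 1 - B / n := by linarith
    have claim : ∀ i : ℕ, i ≤ n →
        ∃ c, c ∈ Icc 0 T ∧ F c = i * (B / n) ∧ G c ≤ a / (1 - B / n) ^ i := by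
      intro i
      induction i with
      | zero =>
        intro _
        exact ⟨0, left_mem_Icc.mpr hT.le, by simp [hF0], by simp [hG0]⟩
      | succ i ih =>
        intro hi
        obtain ⟨c, hcmem, hFc, hGc⟩ := ih (Nat.le_of_succ_le hi)
        have hin : ((i : ℝ) + 1) ≤ n := by exact_mod_cast hi
        have hup : ((i : ℝ) + 1) * (B / n) ≤ B := by
          have h' : ((i : ℝ) + 1) * (B / n) ≤ (n : ℝ) * (B / n) :=
            mul_le_mul_of_nonneg_right hin hε0
          have h'' : (n : ℝ) * (B / n) = B := by field_simp
          linarith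
        have hlow : (i : ℝ) * (B / n) ≤ ((i : ℝ) + 1) * (B / n) := by nlinarith
        have hIVT := intermediate_value_Icc hcmem.2
          (hFcont.mono (Icc_subset_Icc hcmem.1 le_rfl))
        have hmemval : ((i : ℝ) + 1) * (B / n) ∈ Icc (F c) (F T) := by
          constructor
          · rw [hFc]; exact hlow
          · rw [← hBdef]; exact hup
        obtain ⟨c', hc'mem, hFc'⟩ := hIVT hmemval
        have hc'Icc : c' ∈ Icc 0 T := ⟨hcmem.1.trans hc'mem.1, hc'mem.2⟩
        refine ⟨c', hc'Icc, by push_cast; exact hFc', ?_⟩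
        have hGc'0 : 0 ≤ G c' := ha0.trans (hGa c')
        have hstep : G c' ≤ G c + G c' * (B / n) := by
          have hd : G c' - G c = ∫ r in Ioc c c', ψ r ∂ν := hGdiff c c' hcmem.1 hc'mem.1
          have hFd : F c' - F c = B / n := by rw [hFc', hFc]; ring
          have hle : ∫ r in Ioc c c', ψ r ∂ν ≤ ∫ r in Ioc c c', G c' * gind r ∂ν := by
            refine setIntegral_mono_on hψ_int.integrableOn
              ((hgind_int.const_mul (G c')).integrableOn) measurableSet_Ioc
              (fun r hr => ?_)
            have hrT : r ∈ Ioc 0 T :=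
              ⟨lt_of_le_of_lt hcmem.1 hr.1, hr.2.trans hc'Icc.2⟩
            have hφr : φ r ≤ G r := hkey r ⟨hrT.1.le, hrT.2⟩
            have hGr : G r ≤ G c' := hGmono r c' hrT.1.le hr.2
            have hg0r : 0 ≤ g r := hg0 r ⟨hrT.1.le, hrT.2⟩
            rw [hψ_eq r hrT, hgind_eq r hrT]
            have : φ r * (2 * g r) ≤ G c' * (2 * g r) :=
              mul_le_mul_of_nonneg_right (hφr.trans hGr) (by linarith)
            linarith
          have heval : ∫ r in Ioc c c', G c' * gind r ∂ν = G c' * (B / n) := by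
            rw [integral_const_mul, ← hFdiff c c' hcmem.1 hc'mem.1, hFd]
          have h7 : (∫ r in Ioc c c', ψ r ∂ν) ≤ G c' * (B / n) := hle.trans_eq heval
          linarith [hd, h7]
        have hmul : G c' * (1 - B / n) ≤ G c := by nlinarith
        calc G c' ≤ G c / (1 - B / n) := by
              rw [le_div_iff₀ h1ε]; linarith
          _ ≤ (a / (1 - B / n) ^ i) / (1 - B / n) := by gcongr
          _ = a / (1 - B / n) ^ (i + 1) := by
              rw [div_div, pow_succ]
    obtain ⟨c, hcmem, hFc, hGc⟩ := claim n le_rfl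
    have hFcB : F c = B := by
      rw [hFc]; field_simp
    intro τ hτ
    rcases le_total τ c with hle | hle
    · exact (hGmono τ c hτ.1 hle).trans hGc
    · have hd : G τ - G c = ∫ r in Ioc c τ, ψ r ∂ν := hGdiff c τ hcmem.1 hle
      have hle2 : ∫ r in Ioc c τ, ψ r ∂ν ≤ ∫ r in Ioc c τ, M ^ 2 * gind r ∂ν :=
        setIntegral_mono_on hψ_int.integrableOn
          ((hgind_int.const_mul (M ^ 2)).integrableOn) measurableSet_Ioc
          (fun r _ => hψ_le r)
      have heval : ∫ r in Ioc c τ, M ^ 2 * gind r ∂ν = M ^ 2 * (F τ - F c) := by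
        rw [integral_const_mul, ← hFdiff c τ hcmem.1 hle]
      have hFτ : F τ ≤ B := by
        rw [hBdef]
        exact hFmono τ T hτ.1 hτ.2
      have hfin : G τ ≤ G c := by
        have h1 : M ^ 2 * (F τ - F c) ≤ 0 := by
          rw [hFcB]
          nlinarith [sq_nonneg M]
        linarith [hle2.trans_eq heval]
      exact hfin.trans hGc
  -- pass to the limit n → ∞
  intro t ht
  have hφt : ∀ n : ℕ, B < n → φ t ≤ a / (1 - B / n) ^ n :=
    fun n hn => (hkey t ht).trans (hGbound n hn t ht)
  have hlim : Tendsto (fun n : ℕ => a / (1 - B / n) ^ n) atTop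
      (𝓝 (a / Real.exp (-B))) := by
    have h1 : Tendsto (fun n : ℕ => (1 + (-B) / n) ^ n) atTop (𝓝 (Real.exp (-B))) :=
      Real.tendsto_one_add_div_pow_exp (-B)
    have h2 := (tendsto_const_nhds (x := a)).div h1 (Real.exp_ne_zero _)
    refine h2.congr fun n => ?_
    simp only [Pi.div_apply]
    have he : (1:ℝ) + -B / (n:ℝ) = 1 - B / (n:ℝ) := by ring
    rw [he]
  have hexp : a / Real.exp (-B) = a * Real.exp B := by
    rw [Real.exp_neg, div_eq_mul_inv, inv_inv]
  have hfinal : φ t ≤ a * Real.exp B := by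
    rw [← hexp]
    refine ge_of_tendsto hlim ?_
    obtain ⟨n₀, hn₀⟩ := exists_nat_gt B
    rw [eventually_atTop]
    exact ⟨n₀, fun m hm => hφt m (hn₀.trans_le (by exact_mod_cast hm))⟩
  have hxg : ‖u t - v t‖ ^ 2 = φ t := by
    rw [hφdef]
    show _ = ‖x t‖ ^ 2
    rw [hx_eq t ht]
  have hBg : B = 2 * ∫ s in Ioc 0 T, g s ∂ν := by
    rw [hBdef, hFdef]
    show (∫ r in Ioc 0 T, gind r ∂ν) = _
    have he : ∫ r in Ioc 0 T, gind r ∂ν = ∫ r in Ioc 0 T, 2 * g r ∂ν :=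
      setIntegral_congr_fun measurableSet_Ioc fun r hr => hgind_eq r hr
    rw [he, integral_const_mul]
  rw [hxg, ← hBg]
  exact hfinal
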